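/- Let G be a finite simple strongly connected directed graph on n ≥ 1 vertices. Then there exists an ordering σ of V(G) with the following properties: (1) at most one vertex w satisfies f_σ(w) = 0, and if G contains a vertex of odd in-degree then no vertex satisfies f_σ(w) = 0; (2) for any vertices u, v, w, if f_σ(u) > 0, f_σ(v) < 0 and f_σ(w) = 0, then σ(u) < σ(w) < σ(v); in particular every vertex with positive f_σ-value precedes every vertex with negative f_σ-value. -/

import Mathlib

/-!
Basic notions for dynamic monopolies in finite directed graphs.
A directed graph on a vertex type `V` is given by its adjacency relation
`Adj : V → V → Prop`, where `Adj u v` means there is an edge from `u` to `v`.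
-/

variable {V : Type*}

/-- The in-degree of a vertex `v`: the number of vertices `u` with an edge from `u` to `v`. -/
noncomputable def inDeg (Adj : V → V → Prop) (v : V) : ℕ :=
  {u | Adj u v}.ncard

/-- A directed graph is simple: no loops, and no two oppositely directed edges
between the same pair of vertices. -/
def IsSimple (Adj : V → V → Prop) : Prop :=
  Irreflexive Adj ∧ ∀ u v, Adj u v → ¬ Adj v u

/-- A directed graph is strongly connected if any vertex is reachable from any other
by a directed path. -/
def StronglyConnected (Adj : V → V → Prop) : Prop :=
  ∀ u v : V, Relation.ReflTransGen Adj u v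

/-- `M` is a dynamic monopoly (dynamo) for `(G, τ)`: the vertex set can be partitioned
into levels `D_0 = M, D_1, …, D_t` (encoded by a level function) such that every vertex
`v` of level `i ≥ 1` receives at least `τ v` edges from vertices of smaller level. -/
def IsDynamo (Adj : V → V → Prop) (τ : V → ℕ) (M : Set V) : Prop :=
  ∃ level : V → ℕ,
    (∀ v, level v = 0 ↔ v ∈ M) ∧
    ∀ v, 1 ≤ level v → τ v ≤ {u | Adj u v ∧ level u < level v}.ncard

/-- The strict majority threshold `⌈(deg^in(v)+1)/2⌉` (as a natural number,
`(d + 2) / 2 = ⌈(d+1)/2⌉`). -/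
noncomputable def strictMajority (Adj : V → V → Prop) (v : V) : ℕ :=
  (inDeg Adj v + 2) / 2

/-- The `f`-value of a vertex `v` with respect to an ordering `σ` of the vertices:
the number of in-neighbours of `v` appearing after `v` minus the number of
in-neighbours of `v` appearing before `v`. -/
noncomputable def fval [Fintype V] (Adj : V → V → Prop)
    (σ : V ≃ Fin (Fintype.card V)) (v : V) : ℤ :=
  ({u | Adj u v ∧ σ v < σ u}.ncard : ℤ) - ({u | Adj u v ∧ σ u < σ v}.ncard : ℤ)

/-! ### Auxiliary machinery for the main theorem -/

section DynMonAux

attribute [local instance] Classical.propDecidable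

variable (Adj : V → V → Prop)

/-- count of in-neighbours of `v` in a list -/
noncomputable def cntIn (v : V) (l : List V) : ℕ :=
  l.countP fun u => @decide (Adj u v) (Classical.propDecidable _)

lemma cntIn_nil (v : V) : cntIn Adj v [] = 0 := rfl

lemma cntIn_append (v : V) (l₁ l₂ : List V) :
    cntIn Adj v (l₁ ++ l₂) = cntIn Adj v l₁ + cntIn Adj v l₂ :=
  List.countP_append

lemma cntIn_cons (v a : V) (l : List V) :
    cntIn Adj v (a :: l) = cntIn Adj v l + (if Adj a v then 1 else 0) := by
  classical
  rw [cntIn, List.countP_cons]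
  congr 1
  split_ifs with h <;> simp_all

lemma one_le_cntIn (v u : V) (l : List V) (hu : u ∈ l) (h : Adj u v) :
    1 ≤ cntIn Adj v l := by
  classical
  have : l.countP (fun u => @decide (Adj u v) (Classical.propDecidable _)) > 0 := by
    apply List.countP_pos_iff.2
    exact ⟨u, hu, by simp [h]⟩
  unfold cntIn
  omega

lemma ncard_adj_mem (v : V) : ∀ (l : List V), l.Nodup →
    {u | Adj u v ∧ u ∈ l}.ncard = cntIn Adj v l := by
  intro l
  induction l with
  | nil => intro _; simp [cntIn_nil]
  | cons a l ih =>
    intro hnd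
    rw [List.nodup_cons] at hnd
    rw [cntIn_cons]
    by_cases h : Adj a v
    · have hset : {u | Adj u v ∧ u ∈ a :: l} = insert a {u | Adj u v ∧ u ∈ l} := by
        ext u; simp only [Set.mem_insert_iff, Set.mem_setOf_eq, List.mem_cons]
        constructor
        · rintro ⟨hadj, (rfl | hm)⟩
          · exact Or.inl rfl
          · exact Or.inr ⟨hadj, hm⟩
        · rintro (rfl | ⟨hadj, hm⟩)
          · exact ⟨h, Or.inl rfl⟩
          · exact ⟨hadj, Or.inr hm⟩
      rw [hset, Set.ncard_insert_of_notMem (by simp [hnd.1])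
        (Set.Finite.subset l.finite_toSet (fun u hu => hu.2)), ih hnd.2]
      simp [h]
    · have hset : {u | Adj u v ∧ u ∈ a :: l} = {u | Adj u v ∧ u ∈ l} := by
        ext u; simp only [Set.mem_setOf_eq, List.mem_cons]
        constructor
        · rintro ⟨hadj, (rfl | hm)⟩
          · exact absurd hadj h
          · exact ⟨hadj, hm⟩
        · rintro ⟨hadj, hm⟩; exact ⟨hadj, Or.inr hm⟩
      rw [hset, ih hnd.2]
      simp [h]

lemma inDeg_eq_cntIn (v : V) (M : List V) (hnd : M.Nodup) (hc : ∀ x, x ∈ M) :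
    inDeg Adj v = cntIn Adj v M := by
  rw [← ncard_adj_mem Adj v M hnd]
  unfold inDeg
  congr 1
  ext u; simp [hc u]

/-- splits of `l ++ [a]` -/
lemma split_concat {l P S : List V} {a v : V} (h : l ++ [a] = P ++ v :: S) :
    (P = l ∧ v = a ∧ S = []) ∨ ∃ S', S = S' ++ [a] ∧ l = P ++ v :: S' := by
  rcases List.eq_nil_or_concat S with rfl | ⟨S', b, rfl⟩
  · left
    have h2 : l ++ [a] = P ++ [v] := by simpa using h
    have := List.append_inj' h2 rfl
    obtain ⟨h3, h4⟩ := this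
    simp at h4
    exact ⟨h3.symm, h4.symm, rfl⟩
  · right
    rw [List.concat_eq_append] at h
    have h2 : l ++ [a] = (P ++ v :: S') ++ [b] := by simp [h]
    have := List.append_inj' h2 rfl
    obtain ⟨h3, h4⟩ := this
    simp at h4
    exact ⟨S', by simp [h4], h3⟩

/-- splits of `c :: B` -/
lemma split_cons {c v : V} {B B₁ B₂ : List V} (h : c :: B = B₁ ++ v :: B₂) :
    (B₁ = [] ∧ v = c ∧ B₂ = B) ∨ ∃ B₁', B₁ = c :: B₁' ∧ B = B₁' ++ v :: B₂ := by
  cases B₁ with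
  | nil => left; simp at h; exact ⟨rfl, h.1.symm, h.2.symm⟩
  | cons x B₁' =>
    right
    simp only [List.cons_append, List.cons.injEq] at h
    exact ⟨B₁', by simp [h.1], h.2⟩

lemma singleton_split {r v : V} {t₁ t₂ : List V} (h : [r] = t₁ ++ v :: t₂) :
    t₁ = [] ∧ v = r ∧ t₂ = [] := by
  cases t₁ with
  | nil => simp at h; exact ⟨rfl, h.1.symm, h.2⟩
  | cons a t₁' =>
    simp only [List.cons_append, List.cons.injEq] at h
    exact absurd h.2.symm (by simp)

/-- index facts for a split list -/
lemma indexOf_split {M P S : List V} {v : V} (hnd : M.Nodup) (hM : M = P ++ v :: S)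
    (u : V) (hu : u ∈ M) :
    (M.idxOf u < M.idxOf v ↔ u ∈ P) ∧ (M.idxOf v < M.idxOf u ↔ u ∈ S) := by
  subst hM
  rw [List.nodup_append] at hnd
  obtain ⟨hndP, hndvS, hdisj⟩ := hnd
  rw [List.nodup_cons] at hndvS
  have hvP : v ∉ P := fun h => hdisj v h v List.mem_cons_self rfl
  have hidxv : (P ++ v :: S).idxOf v = P.length := by
    rw [List.idxOf_append_of_notMem hvP, List.idxOf_cons_self]
    omega
  rcases List.mem_append.1 hu with huP | huvS
  · have : (P ++ v :: S).idxOf u = P.idxOf u := List.idxOf_append_of_mem huP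
    have hlt : P.idxOf u < P.length := List.idxOf_lt_length_iff.2 huP
    constructor
    · rw [this, hidxv]; exact ⟨fun _ => huP, fun _ => hlt⟩
    · rw [this, hidxv]
      constructor
      · intro h; omega
      · intro hS; exact absurd (List.mem_cons_of_mem v hS) (fun h => hdisj u huP u h rfl)
  · rcases List.mem_cons.1 huvS with rfl | huS
    · rw [hidxv]; simp only [lt_irrefl, false_iff]
      exact ⟨fun h => hvP h, fun h => hndvS.1 h⟩
    · have huP : u ∉ P := fun h => hdisj u h u (List.mem_cons_of_mem v huS) rfl
      have hne : u ≠ v := fun h => hndvS.1 (h ▸ huS)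
      have : (P ++ v :: S).idxOf u = P.length + ((S.idxOf u) + 1) := by
        rw [List.idxOf_append_of_notMem huP, List.idxOf_cons_ne _ (Ne.symm hne)]
      rw [this, hidxv]
      constructor
      · constructor
        · intro h; omega
        · intro h; exact absurd h huP
      · exact ⟨fun _ => huS, fun _ => by omega⟩

/-- The order equivalence from a complete nodup list. -/
noncomputable def listEquiv [Fintype V] (M : List V) (hnd : M.Nodup) (hc : ∀ x, x ∈ M) :
    V ≃ Fin (Fintype.card V) := by
  have hlen : M.length = Fintype.card V := by
    rw [← List.toFinset_card_of_nodup hnd]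
    have : M.toFinset = Finset.univ :=
      Finset.eq_univ_iff_forall.2 (fun x => List.mem_toFinset.2 (hc x))
    rw [this, Finset.card_univ]
  refine Equiv.ofBijective (fun u => ⟨M.idxOf u, hlen ▸ List.idxOf_lt_length_iff.2 (hc u)⟩) ?_
  rw [Fintype.bijective_iff_injective_and_card]
  refine ⟨fun a b hab => ?_, by simp⟩
  have : M.idxOf a = M.idxOf b := by
    simpa using congrArg Fin.val hab
  exact (List.idxOf_inj (hc a)).1 this

lemma listEquiv_lt [Fintype V] (M : List V) (hnd : M.Nodup) (hc : ∀ x, x ∈ M) (u w : V) :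
    listEquiv M hnd hc u < listEquiv M hnd hc w ↔ M.idxOf u < M.idxOf w := Iff.rfl

/-- master f-value computation -/
lemma fval_split [Fintype V] (hirr : Irreflexive Adj) {M P S : List V} {v : V}
    (hnd : M.Nodup) (hc : ∀ x, x ∈ M) (hM : M = P ++ v :: S) :
    fval Adj (listEquiv M hnd hc) v = (cntIn Adj v S : ℤ) - (cntIn Adj v P : ℤ) ∧
    inDeg Adj v = cntIn Adj v P + cntIn Adj v S := by
  have hndP : P.Nodup := by
    subst hM; exact (List.nodup_append.1 hnd).1
  have hndS : S.Nodup := by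
    subst hM; exact ((List.nodup_cons.1 (List.nodup_append.1 hnd).2.1)).2
  constructor
  · unfold fval
    have h1 : {u | Adj u v ∧ (listEquiv M hnd hc) v < (listEquiv M hnd hc) u}
        = {u | Adj u v ∧ u ∈ S} := by
      ext u
      simp only [Set.mem_setOf_eq, listEquiv_lt]
      exact and_congr_right (fun _ => (indexOf_split hnd hM u (hc u)).2)
    have h2 : {u | Adj u v ∧ (listEquiv M hnd hc) u < (listEquiv M hnd hc) v}
        = {u | Adj u v ∧ u ∈ P} := by
      ext u
      simp only [Set.mem_setOf_eq, listEquiv_lt]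
      exact and_congr_right (fun _ => (indexOf_split hnd hM u (hc u)).1)
    rw [h1, h2, ncard_adj_mem Adj v S hndS, ncard_adj_mem Adj v P hndP]
  · rw [inDeg_eq_cntIn Adj v M hnd hc, hM, cntIn_append, cntIn_cons]
    simp [hirr v]

/-- partition of the in-degree according to current lists -/
lemma partition_cnt (A B todo : List V) (v : V)
    (hndA : A.Nodup) (hndB : B.Nodup) (hndT : todo.Nodup)
    (hAB : ∀ x ∈ A, x ∉ B) (hAT : ∀ x ∈ A, x ∉ todo) (hBT : ∀ x ∈ B, x ∉ todo)
    (hcomp : ∀ x : V, x ∈ A ∨ x ∈ B ∨ x ∈ todo) :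
    inDeg Adj v = cntIn Adj v A + cntIn Adj v B + cntIn Adj v todo := by
  have hnd : (A ++ B ++ todo).Nodup := by
    rw [List.nodup_append, List.nodup_append]
    exact ⟨⟨hndA, hndB, fun a ha b hb hab => hAB a ha (hab ▸ hb)⟩, hndT,
      fun a ha b hb hab => by
        rcases List.mem_append.1 ha with h | h
        · exact hAT a h (hab ▸ hb)
        · exact hBT a h (hab ▸ hb)⟩
  have hc : ∀ x, x ∈ A ++ B ++ todo := by
    intro x
    rcases hcomp x with h | h | h <;> simp [h]
  rw [inDeg_eq_cntIn Adj v _ hnd hc, cntIn_append, cntIn_append]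

theorem rec_main (hirr : Irreflexive Adj) (r : V) :
    ∀ (todo A B : List V),
    A.Nodup → B.Nodup → todo.Nodup →
    (∀ x ∈ A, x ∉ B) → (∀ x ∈ A, x ∉ todo) → (∀ x ∈ B, x ∉ todo) →
    (∀ x : V, x ∈ A ∨ x ∈ B ∨ x ∈ todo) →
    (∀ A₁ v A₂, A = A₁ ++ v :: A₂ → 2 * cntIn Adj v A₁ < inDeg Adj v) →
    (∀ B₁ v B₂, B = B₁ ++ v :: B₂ →
      2 * cntIn Adj v B₂ + 2 * cntIn Adj v todo ≤ inDeg Adj v) →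
    (∀ B₁ v B₂, B = B₁ ++ v :: B₂ → v ≠ r → 2 * cntIn Adj v B₂ < inDeg Adj v) →
    r ∈ todo →
    (∀ t₁ t₂, todo = t₁ ++ r :: t₂ → t₂ = []) →
    (∀ t₁ v t₂, todo = t₁ ++ v :: t₂ → v ≠ r → ∃ u ∈ t₂, Adj u v) →
    ∃ A' B' : List V,
      A'.Nodup ∧ B'.Nodup ∧ (∀ x ∈ A', x ∉ B') ∧ (∀ x : V, x ∈ A' ∨ x ∈ B') ∧
      (∀ A₁ v A₂, A' = A₁ ++ v :: A₂ → 2 * cntIn Adj v A₁ < inDeg Adj v) ∧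
      (∀ B₁ v B₂, B' = B₁ ++ v :: B₂ → 2 * cntIn Adj v B₂ ≤ inDeg Adj v) ∧
      (∀ B₁ v B₂, B' = B₁ ++ v :: B₂ → v ≠ r → 2 * cntIn Adj v B₂ < inDeg Adj v) ∧
      (r ∈ A' ∨ ∃ Bt, B' = r :: Bt) := by
  intro todo
  induction todo with
  | nil =>
    intro A B _ _ _ _ _ _ _ _ _ _ h11 _ _
    exact absurd h11 (by simp)
  | cons v rest IH =>
    intro A B hndA hndB hndT hAB hAT hBT hcomp h8 h9 h10 h11 h12 h13
    have hvA : v ∉ A := fun h => hAT v h (List.mem_cons_self)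
    have hvB : v ∉ B := fun h => hBT v h (List.mem_cons_self)
    have hvrest : v ∉ rest := (List.nodup_cons.1 hndT).1
    have hndrest : rest.Nodup := (List.nodup_cons.1 hndT).2
    have hpart : inDeg Adj v = cntIn Adj v A + cntIn Adj v B + cntIn Adj v rest := by
      have := partition_cnt Adj A B (v :: rest) v hndA hndB hndT hAB hAT hBT hcomp
      rw [cntIn_cons] at this
      simpa [hirr v] using this
    by_cases hvr : v = r
    · have hrest : rest = [] := h12 [] rest (by rw [hvr]; rfl)
      subst hrest
      by_cases hb : 2 * cntIn Adj v A < inDeg Adj v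
      · -- place r at the end of A
        refine ⟨A ++ [v], B, ?_, hndB, ?_, ?_, ?_, ?_, ?_, Or.inl (by simp [← hvr])⟩
        · exact List.nodup_append.2 ⟨hndA, List.nodup_singleton v,
            by intro a ha b hb hab; simp at hb; subst hb; subst hab; exact hvA ha⟩
        · intro x hx
          rcases List.mem_append.1 hx with h | h
          · exact hAB x h
          · simp at h; subst h; exact hvB
        · intro x
          rcases hcomp x with h | h | h
          · exact Or.inl (by simp [h])
          · exact Or.inr h
          · simp at h; subst h; exact Or.inl (by simp)
        · intro A₁ w A₂ hsplit
          rcases split_concat hsplit with ⟨rfl, rfl, rfl⟩ | ⟨A₂', rfl, hA⟩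
          · exact hb
          · exact h8 A₁ w A₂' hA
        · intro B₁ w B₂ hsplit
          have := h9 B₁ w B₂ hsplit
          omega
        · exact h10
      · -- place r at the front of B
        push_neg at hb
        refine ⟨A, v :: B, hndA, ?_, ?_, ?_, h8, ?_, ?_, Or.inr ⟨B, by rw [hvr]⟩⟩
        · exact List.nodup_cons.2 ⟨hvB, hndB⟩
        · intro x hx
          simp only [List.mem_cons, not_or]
          refine ⟨fun h => hvA (h ▸ hx), hAB x hx⟩
        · intro x
          rcases hcomp x with h | h | h
          · exact Or.inl h
          · exact Or.inr (List.mem_cons_of_mem v h)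
          · simp at h; subst h; exact Or.inr (List.mem_cons_self)
        · intro B₁ w B₂ hsplit
          rcases split_cons hsplit with ⟨rfl, rfl, rfl⟩ | ⟨B₁', rfl, hB⟩
          · omega
          · have := h9 B₁' w B₂ hB
            omega
        · intro B₁ w B₂ hsplit hwr
          rcases split_cons hsplit with ⟨rfl, rfl, rfl⟩ | ⟨B₁', rfl, hB⟩
          · exact absurd hvr hwr
          · exact h10 B₁' w B₂ hB hwr
    · -- v ≠ r : recurse
      have hrrest : r ∈ rest := by
        rcases List.mem_cons.1 h11 with h | h
        · exact absurd h.symm hvr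
        · exact h
      have h12' : ∀ t₁ t₂, rest = t₁ ++ r :: t₂ → t₂ = [] := by
        intro t₁ t₂ h
        exact h12 (v :: t₁) t₂ (by simp [h])
      have h13' : ∀ t₁ w t₂, rest = t₁ ++ w :: t₂ → w ≠ r → ∃ u ∈ t₂, Adj u w := by
        intro t₁ w t₂ h hw
        exact h13 (v :: t₁) w t₂ (by simp [h]) hw
      by_cases hb : 2 * cntIn Adj v A < inDeg Adj v
      · -- put v at end of A
        apply IH (A ++ [v]) B
        · exact List.nodup_append.2 ⟨hndA, List.nodup_singleton v,
            by intro a ha b hb hab; simp at hb; subst hb; subst hab; exact hvA ha⟩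
        · exact hndB
        · exact hndrest
        · intro x hx
          rcases List.mem_append.1 hx with h | h
          · exact hAB x h
          · simp at h; subst h; exact hvB
        · intro x hx
          rcases List.mem_append.1 hx with h | h
          · exact fun hr => hAT x h (List.mem_cons_of_mem v hr)
          · simp at h; subst h; exact hvrest
        · exact fun x hx hr => hBT x hx (List.mem_cons_of_mem v hr)
        · intro x
          rcases hcomp x with h | h | h
          · exact Or.inl (by simp [h])
          · exact Or.inr (Or.inl h)
          · rcases List.mem_cons.1 h with h | h
            · subst h; exact Or.inl (by simp)
            · exact Or.inr (Or.inr h)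
        · intro A₁ w A₂ hsplit
          rcases split_concat hsplit with ⟨rfl, rfl, rfl⟩ | ⟨A₂', rfl, hA⟩
          · exact hb
          · exact h8 A₁ w A₂' hA
        · intro B₁ w B₂ hsplit
          have h1 := h9 B₁ w B₂ hsplit
          have h2 : cntIn Adj w rest ≤ cntIn Adj w (v :: rest) := by
            rw [cntIn_cons]; omega
          omega
        · exact h10
        · exact hrrest
        · exact h12'
        · exact h13'
      · -- put v at front of B
        push_neg at hb
        apply IH A (v :: B)
        · exact hndA
        · exact List.nodup_cons.2 ⟨hvB, hndB⟩
        · exact hndrest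
        · intro x hx
          simp only [List.mem_cons, not_or]
          exact ⟨fun h => hvA (h ▸ hx), hAB x hx⟩
        · exact fun x hx hr => hAT x hx (List.mem_cons_of_mem v hr)
        · intro x hx
          rcases List.mem_cons.1 hx with h | h
          · subst h; exact hvrest
          · exact fun hr => hBT x h (List.mem_cons_of_mem v hr)
        · intro x
          rcases hcomp x with h | h | h
          · exact Or.inl h
          · exact Or.inr (Or.inl (List.mem_cons_of_mem v h))
          · rcases List.mem_cons.1 h with h | h
            · subst h; exact Or.inr (Or.inl (List.mem_cons_self))
            · exact Or.inr (Or.inr h)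
        · exact h8
        · intro B₁ w B₂ hsplit
          rcases split_cons hsplit with ⟨rfl, rfl, rfl⟩ | ⟨B₁', rfl, hB⟩
          · omega
          · have h1 := h9 B₁' w B₂ hB
            have h2 : cntIn Adj w rest ≤ cntIn Adj w (v :: rest) := by
              rw [cntIn_cons]; omega
            omega
        · intro B₁ w B₂ hsplit hwr
          rcases split_cons hsplit with ⟨rfl, rfl, rfl⟩ | ⟨B₁', rfl, hB⟩
          · obtain ⟨u, hu, hadj⟩ := h13 [] w rest rfl hwr
            have := one_le_cntIn Adj w u rest hu hadj
            omega
          · exact h10 B₁' w B₂ hB hwr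
        · exact hrrest
        · exact h12'
        · exact h13'

lemma exists_cross {W : List V} {r : V} (hr : r ∈ W) :
    ∀ {x : V}, Relation.ReflTransGen Adj r x → x ∉ W →
    ∃ u ∈ W, ∃ v, v ∉ W ∧ Adj u v := by
  intro x hpath
  induction hpath with
  | refl => intro hx; exact absurd hr hx
  | tail _ hbc ih =>
    rename_i b c _
    intro hc
    by_cases hb : b ∈ W
    · exact ⟨b, hb, c, hc, hbc⟩
    · exact ih hb

/-- grows a reachability order -/
lemma grow [Fintype V] (hsc : StronglyConnected Adj) (r : V) :
    ∀ (k : ℕ) (W : List V), W.Nodup → W ≠ [] → W.head? = some r →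
    (∀ t₁ v t₂, W = t₁ ++ v :: t₂ → t₁ ≠ [] → ∃ u ∈ t₁, Adj u v) →
    Fintype.card V ≤ W.length + k →
    ∃ W₂ : List V, W₂.Nodup ∧ (∀ x, x ∈ W₂) ∧ W₂.head? = some r ∧
      (∀ t₁ v t₂, W₂ = t₁ ++ v :: t₂ → t₁ ≠ [] → ∃ u ∈ t₁, Adj u v) := by
  intro k
  induction k with
  | zero =>
    intro W hnd hne hhead hprop hlen
    refine ⟨W, hnd, ?_, hhead, hprop⟩
    have h1 : W.toFinset.card = W.length := List.toFinset_card_of_nodup hnd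
    have h2 : W.toFinset = Finset.univ := by
      apply Finset.eq_univ_of_card
      have h3 : W.toFinset.card ≤ Fintype.card V := Finset.card_le_univ _
      omega
    intro x
    rw [← List.mem_toFinset, h2]
    exact Finset.mem_univ x
  | succ k IH =>
    intro W hnd hne hhead hprop hlen
    by_cases hfull : ∀ x, x ∈ W
    · exact ⟨W, hnd, hfull, hhead, hprop⟩
    · push_neg at hfull
      obtain ⟨x, hx⟩ := hfull
      have hrW : r ∈ W := by
        cases W with
        | nil => exact absurd rfl hne
        | cons a W' => simp at hhead; subst hhead; exact List.mem_cons_self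
      obtain ⟨u, hu, v, hv, hadj⟩ := exists_cross Adj hrW (hsc r x) hx
      refine IH (W ++ [v]) ?_ (by simp) ?_ ?_ ?_
      · exact List.nodup_append.2 ⟨hnd, List.nodup_singleton v,
          by intro a ha b hb hab; simp at hb; subst hb; subst hab; exact hv ha⟩
      · cases W with
        | nil => exact absurd rfl hne
        | cons a W' => simpa using hhead
      · intro t₁ w t₂ hsplit ht₁
        rcases split_concat hsplit with ⟨rfl, rfl, rfl⟩ | ⟨t₂', rfl, hW⟩
        · exact ⟨u, hu, hadj⟩
        · exact hprop t₁ w t₂' hW ht₁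
      · simp only [List.length_append, List.length_singleton]
        omega

/-- Key construction lemma: for any root `r`, there is an ordering in which every
vertex other than `r` has nonzero `f`-value, all positive values come first, then
possibly a zero, then all negative values. -/
lemma key_ordering [Fintype V] [Nonempty V] (hsimple : IsSimple Adj)
    (hsc : StronglyConnected Adj) (r : V) :
    ∃ σ : V ≃ Fin (Fintype.card V),
      (∀ v, v ≠ r → fval Adj σ v ≠ 0) ∧
      (Odd (inDeg Adj r) → ∀ v, fval Adj σ v ≠ 0) ∧
      (∀ u v w, 0 < fval Adj σ u → fval Adj σ v < 0 → fval Adj σ w = 0 →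
        σ u < σ w ∧ σ w < σ v) ∧
      (∀ u v, 0 < fval Adj σ u → fval Adj σ v < 0 → σ u < σ v) := by
  classical
  -- build the reachability order W starting at r
  obtain ⟨W, hndW, hcW, hheadW, hpropW⟩ := grow Adj hsc r (Fintype.card V) [r]
    (List.nodup_singleton r) (by simp) (by simp)
    (fun t₁ v t₂ h hne => absurd (singleton_split h).1 hne) (by simp)
  -- the insertion order is the reverse of W
  set L := W.reverse with hL
  have hndL : L.Nodup := by rw [hL, List.nodup_reverse]; exact hndW
  have hcL : ∀ x, x ∈ L := fun x => by rw [hL, List.mem_reverse]; exact hcW x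
  have hWL : ∀ t₁ (v : V) t₂, L = t₁ ++ v :: t₂ → W = t₂.reverse ++ v :: t₁.reverse := by
    intro t₁ v t₂ h
    have : W = L.reverse := by rw [hL, List.reverse_reverse]
    rw [this, h]
    simp
  have h12L : ∀ t₁ t₂, L = t₁ ++ r :: t₂ → t₂ = [] := by
    intro t₁ t₂ h
    have hW := hWL t₁ r t₂ h
    by_contra hne
    have : t₂.reverse ≠ [] := fun hh => hne (by simpa using congrArg List.reverse hh)
    obtain ⟨a, X, hX⟩ := List.exists_cons_of_ne_nil this
    rw [hX] at hW
    have har : a = r := by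
      rw [hW] at hheadW
      simpa using hheadW
    subst har
    have : (a :: (X ++ a :: t₁.reverse)).Nodup := by
      rw [List.cons_append] at hW
      rw [← hW]; exact hndW
    rw [List.nodup_cons] at this
    exact this.1 (by simp)
  have h13L : ∀ t₁ (v : V) t₂, L = t₁ ++ v :: t₂ → v ≠ r → ∃ u ∈ t₂, Adj u v := by
    intro t₁ v t₂ h hvr
    have hW := hWL t₁ v t₂ h
    have hne : t₂.reverse ≠ [] := by
      intro hh
      rw [hh] at hW
      simp at hW
      rw [hW] at hheadW
      simp at hheadW
      exact hvr hheadW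
    obtain ⟨u, hu, hadj⟩ := hpropW t₂.reverse v t₁.reverse hW hne
    exact ⟨u, List.mem_reverse.1 hu, hadj⟩
  have hrL : r ∈ L := hcL r
  -- run the construction
  obtain ⟨A', B', c1, c2, c3, c4, c5, c6, c7, c8⟩ :=
    rec_main Adj hsimple.1 r L [] [] List.nodup_nil List.nodup_nil hndL
      (by simp) (by simp) (by simp) (fun x => Or.inr (Or.inr (hcL x)))
      (by intro A₁ v A₂ h; simp at h) (by intro B₁ v B₂ h; simp at h)
      (by intro B₁ v B₂ h; simp at h) hrL h12L h13L
  set M := A' ++ B' with hMdef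
  have hndM : M.Nodup := by
    rw [hMdef, List.nodup_append]
    exact ⟨c1, c2, fun a ha b hb hab => c3 a ha (hab ▸ hb)⟩
  have hcM : ∀ x, x ∈ M := by
    intro x
    rw [hMdef, List.mem_append]
    exact c4 x
  set σ := listEquiv M hndM hcM with hσdef
  -- f-value facts
  have FA : ∀ v ∈ A', 0 < fval Adj σ v := by
    intro v hv
    obtain ⟨A₁, A₂, hA⟩ := List.append_of_mem hv
    have hM : M = A₁ ++ v :: (A₂ ++ B') := by rw [hMdef, hA]; simp
    obtain ⟨hf, hd⟩ := fval_split Adj hsimple.1 hndM hcM hM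
    have hlt := c5 A₁ v A₂ hA
    rw [hσdef, hf]
    have h1 : cntIn Adj v A₁ < cntIn Adj v (A₂ ++ B') := by omega
    omega
  have FB : ∀ v ∈ B', ∀ B₁ B₂, B' = B₁ ++ v :: B₂ →
      fval Adj σ v = 2 * (cntIn Adj v B₂ : ℤ) - (inDeg Adj v : ℤ) := by
    intro v _ B₁ B₂ hB
    have hM : M = (A' ++ B₁) ++ v :: B₂ := by rw [hMdef, hB]; simp
    obtain ⟨hf, hd⟩ := fval_split Adj hsimple.1 hndM hcM hM
    rw [hσdef, hf, hd]
    push_cast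
    ring
  have FBle : ∀ v ∈ B', fval Adj σ v ≤ 0 := by
    intro v hv
    obtain ⟨B₁, B₂, hB⟩ := List.append_of_mem hv
    have := FB v hv B₁ B₂ hB
    have h6 := c6 B₁ v B₂ hB
    rw [this]
    have : 2 * (cntIn Adj v B₂ : ℤ) ≤ (inDeg Adj v : ℤ) := by exact_mod_cast h6
    omega
  have FBlt : ∀ v ∈ B', v ≠ r → fval Adj σ v < 0 := by
    intro v hv hvr
    obtain ⟨B₁, B₂, hB⟩ := List.append_of_mem hv
    have := FB v hv B₁ B₂ hB
    have h7 := c7 B₁ v B₂ hB hvr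
    rw [this]
    have : 2 * (cntIn Adj v B₂ : ℤ) < (inDeg Adj v : ℤ) := by exact_mod_cast h7
    omega
  have FBodd : ∀ v ∈ B', Odd (inDeg Adj v) → fval Adj σ v ≠ 0 := by
    intro v hv hodd
    obtain ⟨B₁, B₂, hB⟩ := List.append_of_mem hv
    have heq := FB v hv B₁ B₂ hB
    intro h0
    rw [heq] at h0
    have : (inDeg Adj v : ℤ) = 2 * (cntIn Adj v B₂ : ℤ) := by omega
    have : inDeg Adj v = 2 * cntIn Adj v B₂ := by exact_mod_cast this
    rw [Nat.odd_iff] at hodd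
    omega
  -- location fact
  have LOC : ∀ a ∈ A', ∀ b ∈ B', σ a < σ b := by
    intro a ha b hb
    obtain ⟨B₁, B₂, hB⟩ := List.append_of_mem hb
    have hM : M = (A' ++ B₁) ++ b :: B₂ := by rw [hMdef, hB]; simp
    have := (indexOf_split hndM hM a (hcM a)).1
    rw [hσdef]
    rw [listEquiv_lt]
    exact this.2 (List.mem_append.2 (Or.inl ha))
  -- classification
  have hposA : ∀ u, 0 < fval Adj σ u → u ∈ A' := by
    intro u hu
    rcases c4 u with h | h
    · exact h
    · exact absurd hu (by have := FBle u h; omega)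
  have hnegB : ∀ v, fval Adj σ v < 0 → v ∈ B' := by
    intro v hv
    rcases c4 v with h | h
    · exact absurd hv (by have := FA v h; omega)
    · exact h
  have hzero : ∀ w, fval Adj σ w = 0 → w = r ∧ w ∈ B' := by
    intro w hw
    rcases c4 w with h | h
    · exact absurd hw (by have := FA w h; omega)
    · refine ⟨?_, h⟩
      by_contra hwr
      have := FBlt w h hwr
      omega
  refine ⟨σ, ?_, ?_, ?_, ?_⟩
  · intro v hvr h0
    exact hvr (hzero v h0).1
  · intro hodd v h0
    obtain ⟨rfl, hvB⟩ := hzero v h0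
    exact FBodd v hvB hodd h0
  · intro u v w hu hv hw
    obtain ⟨rfl, hwB⟩ := hzero w hw
    have hBt : ∃ Bt, B' = w :: Bt := by
      rcases c8 with h | h
      · exact absurd hwB (c3 w h)
      · exact h
    obtain ⟨Bt, hBt⟩ := hBt
    constructor
    · exact LOC u (hposA u hu) w hwB
    · have hvB : v ∈ B' := hnegB v hv
      have hvw : v ≠ w := by
        intro h; rw [h] at hv; omega
      have hvBt : v ∈ Bt := by
        rw [hBt] at hvB
        rcases List.mem_cons.1 hvB with h | h
        · exact absurd h hvw
        · exact h
      have hM : M = A' ++ w :: Bt := by rw [hMdef, hBt]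
      have := (indexOf_split hndM hM v (hcM v)).2
      rw [hσdef, listEquiv_lt]
      exact this.2 hvBt
  · intro u v hu hv
    exact LOC u (hposA u hu) v (hnegB v hv)

end DynMonAux

/-- every simple strongly connected directed graph admits an ordering `σ`
such that (1) at most one vertex has zero `f_σ`-value, and none if some vertex has odd
in-degree; (2) every vertex of positive `f_σ`-value precedes every vertex of zero
`f_σ`-value, which in turn precedes every vertex of negative `f_σ`-value; in particular
every vertex of positive `f_σ`-value precedes every vertex of negative `f_σ`-value. -/
theorem exists_ordering_fval_signs_sorted
    {V : Type*} [Fintype V] [Nonempty V] (Adj : V → V → Prop)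
    (hsimple : IsSimple Adj) (hsc : StronglyConnected Adj) :
    ∃ σ : V ≃ Fin (Fintype.card V),
      {v | fval Adj σ v = 0}.Subsingleton ∧
      ((∃ v, Odd (inDeg Adj v)) → ∀ w, fval Adj σ w ≠ 0) ∧
      (∀ u v w, 0 < fval Adj σ u → fval Adj σ v < 0 → fval Adj σ w = 0 →
        σ u < σ w ∧ σ w < σ v) ∧
      (∀ u v, 0 < fval Adj σ u → fval Adj σ v < 0 → σ u < σ v) := by
  classical
  by_cases hodd : ∃ v, Odd (inDeg Adj v)
  · obtain ⟨r, hr⟩ := hodd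
    obtain ⟨σ, k1, k2, k3, k4⟩ := key_ordering Adj hsimple hsc r
    refine ⟨σ, ?_, fun _ w => k2 hr w, k3, k4⟩
    intro a ha b hb
    have ha' : a = r := by
      by_contra h; exact k1 a h ha
    have hb' : b = r := by
      by_contra h; exact k1 b h hb
    rw [ha', hb']
  · have r : V := Classical.arbitrary V
    obtain ⟨σ, k1, _, k3, k4⟩ := key_ordering Adj hsimple hsc r
    refine ⟨σ, ?_, fun h => absurd h hodd, k3, k4⟩
    intro a ha b hb
    have ha' : a = r := by
      by_contra h; exact k1 a h ha
    have hb' : b = r := by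
      by_contra h; exact k1 b h hb
    rw [ha', hb']
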